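/- Mirsky's inequality for density matrices: if ρ and σ are density matrices on ℂ^d with eigenvalues r₁ ≥ r₂ ≥ … ≥ r_d and s₁ ≥ s₂ ≥ … ≥ s_d respectively (sorted decreasingly), then ∑_i |r_i − s_i| ≤ ‖ρ − σ‖₁. -/

import Mathlib

open Matrix BigOperators
open scoped Kronecker ComplexOrder

noncomputable def shannonEntropy {d : ℕ} (p : Fin d → ℝ) : ℝ := ∑ x, Real.negMulLog (p x)

noncomputable def binEnt (x : ℝ) : ℝ := Real.negMulLog x + Real.negMulLog (1 - x)

def IsProb {d : ℕ} (p : Fin d → ℝ) : Prop := (∀ x, 0 ≤ p x) ∧ ∑ x, p x = 1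

def IsDensity {n : Type*} [Fintype n] [DecidableEq n] (ρ : Matrix n n ℂ) : Prop :=
  ρ.PosSemidef ∧ ρ.trace = 1

noncomputable def traceNorm {n : Type*} [Fintype n] [DecidableEq n] (A : Matrix n n ℂ) : ℝ :=
  ∑ i, Real.sqrt ((Matrix.posSemidef_conjTranspose_mul_self A).1.eigenvalues i)

noncomputable def vnEntropy {n : Type*} [Fintype n] [DecidableEq n] (ρ : Matrix n n ℂ) : ℝ :=
  if h : ρ.IsHermitian then ∑ i, Real.negMulLog (h.eigenvalues i) else 0

noncomputable def ptraceA {a b : ℕ} (ρ : Matrix (Fin a × Fin b) (Fin a × Fin b) ℂ) : Matrix (Fin b) (Fin b) ℂ :=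
  Matrix.of fun j j' => ∑ i, ρ (i, j) (i, j')

noncomputable def ptraceB {a b : ℕ} (ρ : Matrix (Fin a × Fin b) (Fin a × Fin b) ℂ) : Matrix (Fin a) (Fin a) ℂ :=
  Matrix.of fun i i' => ∑ j, ρ (i, j) (i', j)

noncomputable def condEnt {a b : ℕ} (ρ : Matrix (Fin a × Fin b) (Fin a × Fin b) ℂ) : ℝ :=
  vnEntropy ρ - vnEntropy (ptraceA ρ)

noncomputable def posPart {n : Type*} [Fintype n] [DecidableEq n] (A : Matrix n n ℂ) : Matrix n n ℂ :=
  if h : A.IsHermitian then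
    (h.eigenvectorUnitary : Matrix n n ℂ) * Matrix.diagonal (fun i => ((max (h.eigenvalues i) 0 : ℝ) : ℂ)) *
      (h.eigenvectorUnitary : Matrix n n ℂ)ᴴ
  else 0

noncomputable def matLog {n : Type*} [Fintype n] [DecidableEq n] (A : Matrix n n ℂ) : Matrix n n ℂ :=
  if h : A.IsHermitian then
    (h.eigenvectorUnitary : Matrix n n ℂ) * Matrix.diagonal (fun i => (Real.log (h.eigenvalues i) : ℂ)) *
      (h.eigenvectorUnitary : Matrix n n ℂ)ᴴ
  else 0

noncomputable def relEnt {n : Type*} [Fintype n] [DecidableEq n] (ρ γ : Matrix n n ℂ) : ℝ :=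
  ((ρ * (matLog ρ - matLog γ)).trace).re

open Classical in
noncomputable def matSqrt {n : Type*} [Fintype n] [DecidableEq n] (A : Matrix n n ℂ) : Matrix n n ℂ :=
  if h : A.PosSemidef then
    (h.1.eigenvectorUnitary : Matrix n n ℂ) * Matrix.diagonal ((↑) ∘ Real.sqrt ∘ h.1.eigenvalues) *
      (star h.1.eigenvectorUnitary : Matrix n n ℂ)
  else 0

noncomputable def fidelity {n : Type*} [Fintype n] [DecidableEq n] (ρ σ : Matrix n n ℂ) : ℝ :=
  traceNorm (matSqrt ρ * matSqrt σ)

noncomputable def maxEig {n : Type*} [Fintype n] [DecidableEq n] (A : Matrix n n ℂ) : ℝ :=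
  if h : A.IsHermitian then ⨆ i, h.eigenvalues i else 0

noncomputable def outer {n : Type*} [Fintype n] (v : n → ℂ) : Matrix n n ℂ :=
  Matrix.vecMulVec v (star v)

-- dot product through conjugated matrix
lemma dot_conj {d : ℕ} (U D : Matrix (Fin d) (Fin d) ℂ) (x : Fin d → ℂ) :
    star x ⬝ᵥ (U * D * star U) *ᵥ x
      = star (star U *ᵥ x) ⬝ᵥ D *ᵥ (star U *ᵥ x) := by
  rw [← mulVec_mulVec, ← mulVec_mulVec, dotProduct_mulVec (star x) U,
    star_mulVec, Matrix.star_eq_conjTranspose, conjTranspose_conjTranspose,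
    ← dotProduct_mulVec]

lemma dot_diag_re {d : ℕ} (f : Fin d → ℝ) (y : Fin d → ℂ) :
    (star y ⬝ᵥ (Matrix.diagonal (fun i => (f i : ℂ))) *ᵥ y).re
      = ∑ i, f i * Complex.normSq (y i) := by
  simp only [dotProduct, mulVec_diagonal, Pi.star_apply, Complex.re_sum]
  refine Finset.sum_congr rfl fun i _ => ?_
  have : (starRingEnd ℂ) (y i) * ((f i : ℂ) * y i)
      = ((f i * Complex.normSq (y i) : ℝ) : ℂ) := by
    push_cast
    rw [Complex.normSq_eq_conj_mul_self]
    ring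
  rw [show star (y i) = (starRingEnd ℂ) (y i) from rfl, this, Complex.ofReal_re]

lemma unitary_dot {d : ℕ} (U : Matrix.unitaryGroup (Fin d) ℂ) (x : Fin d → ℂ) :
    star ((star (U : Matrix (Fin d) (Fin d) ℂ)) *ᵥ x) ⬝ᵥ (star (U : Matrix (Fin d) (Fin d) ℂ)) *ᵥ x
      = star x ⬝ᵥ x := by
  rw [dotProduct_mulVec, star_mulVec, Matrix.star_eq_conjTranspose,
    conjTranspose_conjTranspose, vecMul_vecMul,
    show (U : Matrix (Fin d) (Fin d) ℂ) * (U : Matrix (Fin d) (Fin d) ℂ)ᴴ = 1 from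
      (Matrix.mem_unitaryGroup_iff).mp U.2, vecMul_one]

lemma trace_conj_diag {d : ℕ} (U : Matrix.unitaryGroup (Fin d) ℂ) (f : Fin d → ℝ) :
    ((U : Matrix (Fin d) (Fin d) ℂ) * Matrix.diagonal (fun i => (f i : ℂ)) *
      star (U : Matrix (Fin d) (Fin d) ℂ)).trace = ∑ i, (f i : ℂ) := by
  rw [Matrix.trace_mul_cycle,
    show star (U : Matrix (Fin d) (Fin d) ℂ) * (U : Matrix (Fin d) (Fin d) ℂ) = 1 from U.2.1,
    Matrix.one_mul, Matrix.trace_diagonal]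

lemma trace_eq_sum_eigs {d : ℕ} {A : Matrix (Fin d) (Fin d) ℂ} (hA : A.IsHermitian) :
    A.trace = ∑ i, (hA.eigenvalues i : ℂ) := by
  conv_lhs => rw [hA.spectral_theorem]
  exact trace_conj_diag hA.eigenvectorUnitary hA.eigenvalues

lemma quad_re {d : ℕ} {A : Matrix (Fin d) (Fin d) ℂ} (hA : A.IsHermitian) (x : Fin d → ℂ) :
    (star x ⬝ᵥ A *ᵥ x).re = ∑ i, hA.eigenvalues i *
      Complex.normSq ((star (hA.eigenvectorUnitary : Matrix (Fin d) (Fin d) ℂ) *ᵥ x) i) := by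
  conv_lhs => rw [hA.spectral_theorem, Unitary.conjStarAlgAut_apply]
  rw [dot_conj]
  exact dot_diag_re hA.eigenvalues _

lemma eig_mono {d : ℕ} {A B : Matrix (Fin d) (Fin d) ℂ} (hA : A.IsHermitian)
    (hB : B.IsHermitian) (hBA : (B - A).PosSemidef) {a b : Fin d → ℝ}
    (ha : Antitone a) (hb : Antitone b) (ea eb : Equiv.Perm (Fin d))
    (hae : a = hA.eigenvalues ∘ ea) (hbe : b = hB.eigenvalues ∘ eb) (k : Fin d) :
    a k ≤ b k := by
  classical
  set UA : Matrix (Fin d) (Fin d) ℂ := (hA.eigenvectorUnitary : Matrix (Fin d) (Fin d) ℂ) with hUA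
  set UB : Matrix (Fin d) (Fin d) ℂ := (hB.eigenvectorUnitary : Matrix (Fin d) (Fin d) ℂ) with hUB
  set S₁ : Finset (Fin d) := (Finset.Iic k).image ea with hS₁
  set S₂ : Finset (Fin d) := (Finset.Ici k).image eb with hS₂
  have hcard₁ : S₁.card = k.val + 1 := by
    rw [hS₁, Finset.card_image_of_injective _ ea.injective, Fin.card_Iic]
  have hcard₂ : S₂.card = d - k.val := by
    rw [hS₂, Finset.card_image_of_injective _ eb.injective, Fin.card_Ici]
  -- the constraint map
  let L : (Fin d → ℂ) →ₗ[ℂ] (({i // i ∉ S₁} ⊕ {i // i ∉ S₂}) → ℂ) :=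
    { toFun := fun x => Sum.elim (fun i => (star UA *ᵥ x) i.1) (fun i => (star UB *ᵥ x) i.1)
      map_add' := by
        intro x y; funext i; cases i <;> simp [Matrix.mulVec_add]
      map_smul' := by
        intro c x; funext i; cases i <;> simp [Matrix.mulVec_smul] }
  have hk : k.val < d := k.isLt
  have hcardι : Fintype.card ({i // i ∉ S₁} ⊕ {i // i ∉ S₂}) < d := by
    rw [Fintype.card_sum, Fintype.card_subtype_compl, Fintype.card_subtype_compl]
    rw [Fintype.card_coe, Fintype.card_coe, hcard₁, hcard₂, Fintype.card_fin]
    omega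
  have hker : LinearMap.ker L ≠ ⊥ := by
    apply LinearMap.ker_ne_bot_of_finrank_lt
    rw [Module.finrank_pi, Module.finrank_pi]
    simpa using hcardι
  obtain ⟨x, hxL, hx0⟩ := Submodule.exists_mem_ne_zero_of_ne_bot hker
  set y := star UA *ᵥ x with hy
  set z := star UB *ᵥ x with hz
  have hy0 : ∀ i ∉ S₁, y i = 0 := fun i hi => congrFun hxL (Sum.inl ⟨i, hi⟩)
  have hz0 : ∀ i ∉ S₂, z i = 0 := fun i hi => congrFun hxL (Sum.inr ⟨i, hi⟩)
  set N : ℝ := ∑ i, Complex.normSq (x i) with hN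
  have hNpos : 0 < N := by
    rw [hN]
    have h1 : ∃ j, x j ≠ 0 := by
      by_contra h; push_neg at h; exact hx0 (funext h)
    obtain ⟨j, hj⟩ := h1
    have : 0 < Complex.normSq (x j) := Complex.normSq_pos.mpr hj
    exact this.trans_le (Finset.single_le_sum (fun i _ => Complex.normSq_nonneg _)
      (Finset.mem_univ j))
  have hdotre : ∀ v : Fin d → ℂ, (star v ⬝ᵥ v).re = ∑ i, Complex.normSq (v i) := by
    intro v
    simp only [dotProduct, Pi.star_apply, Complex.re_sum]
    refine Finset.sum_congr rfl fun i _ => ?_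
    rw [show star (v i) = (starRingEnd ℂ) (v i) from rfl, ← Complex.normSq_eq_conj_mul_self,
      Complex.ofReal_re]
  have hyN : ∑ i, Complex.normSq (y i) = N := by
    rw [← hdotre y, hy, unitary_dot hA.eigenvectorUnitary x, hdotre x]
  have hzN : ∑ i, Complex.normSq (z i) = N := by
    rw [← hdotre z, hz, unitary_dot hB.eigenvectorUnitary x, hdotre x]
  -- lower bound for A
  have hAq : a k * N ≤ (star x ⬝ᵥ A *ᵥ x).re := by
    rw [quad_re hA x, ← hy]
    calc a k * N = ∑ i, a k * Complex.normSq (y i) := by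
          rw [← Finset.mul_sum, hyN]
      _ ≤ ∑ i, hA.eigenvalues i * Complex.normSq (y i) := by
          apply Finset.sum_le_sum
          intro i _
          by_cases hi : i ∈ S₁
          · obtain ⟨j, hj, rfl⟩ := Finset.mem_image.mp hi
            have : a k ≤ hA.eigenvalues (ea j) := by
              have h2 := ha (Finset.mem_Iic.mp hj)
              have h3 : hA.eigenvalues (ea j) = a j := by rw [hae]; rfl
              rw [h3]; exact h2
            exact mul_le_mul_of_nonneg_right this (Complex.normSq_nonneg _)
          · rw [hy0 i hi]; simp
  have hBq : (star x ⬝ᵥ B *ᵥ x).re ≤ b k * N := by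
    rw [quad_re hB x, ← hz]
    calc ∑ i, hB.eigenvalues i * Complex.normSq (z i)
        ≤ ∑ i, b k * Complex.normSq (z i) := by
          apply Finset.sum_le_sum
          intro i _
          by_cases hi : i ∈ S₂
          · obtain ⟨j, hj, rfl⟩ := Finset.mem_image.mp hi
            have : hB.eigenvalues (eb j) ≤ b k := by
              have h2 := hb (Finset.mem_Ici.mp hj)
              have h3 : hB.eigenvalues (eb j) = b j := by rw [hbe]; rfl
              rw [h3]; exact h2
            exact mul_le_mul_of_nonneg_right this (Complex.normSq_nonneg _)
          · rw [hz0 i hi]; simp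
      _ = b k * N := by rw [← Finset.mul_sum, hzN]
  have hstep : (star x ⬝ᵥ A *ᵥ x).re ≤ (star x ⬝ᵥ B *ᵥ x).re := by
    have h := hBA.dotProduct_mulVec_nonneg x
    rw [Matrix.sub_mulVec, dotProduct_sub] at h
    have := Complex.le_def.mp h
    simp only [Complex.zero_re, Complex.sub_re] at this
    linarith [this.1]
  have : a k * N ≤ b k * N := by linarith
  exact le_of_mul_le_mul_right this hNpos

lemma conj_diag_mul {d : ℕ} (U : Matrix.unitaryGroup (Fin d) ℂ) (f g : Fin d → ℂ) :
    ((U : Matrix (Fin d) (Fin d) ℂ) * Matrix.diagonal f * star (U : Matrix (Fin d) (Fin d) ℂ)) *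
      ((U : Matrix (Fin d) (Fin d) ℂ) * Matrix.diagonal g * star (U : Matrix (Fin d) (Fin d) ℂ))
    = (U : Matrix (Fin d) (Fin d) ℂ) * Matrix.diagonal (fun i => f i * g i) *
        star (U : Matrix (Fin d) (Fin d) ℂ) := by
  have h1 : star (U : Matrix (Fin d) (Fin d) ℂ) * (U : Matrix (Fin d) (Fin d) ℂ) = 1 := U.2.1
  simp only [Matrix.mul_assoc]
  rw [← Matrix.mul_assoc (star (U : Matrix (Fin d) (Fin d) ℂ)) (U : Matrix (Fin d) (Fin d) ℂ),
    h1, Matrix.one_mul, ← Matrix.mul_assoc (Matrix.diagonal f), Matrix.diagonal_mul_diagonal]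

lemma conj_diag_psd {d : ℕ} (U : Matrix.unitaryGroup (Fin d) ℂ) {f : Fin d → ℝ}
    (hf : ∀ i, 0 ≤ f i) :
    (((U : Matrix (Fin d) (Fin d) ℂ) * Matrix.diagonal (fun i => (f i : ℂ)) *
      star (U : Matrix (Fin d) (Fin d) ℂ))).PosSemidef := by
  rw [Matrix.star_eq_conjTranspose]
  refine Matrix.PosSemidef.mul_mul_conjTranspose_same ?_ _
  refine Matrix.posSemidef_diagonal_iff.mpr fun i => ?_
  exact_mod_cast hf i

open scoped MatrixOrder in
lemma traceNorm_hermitian {d : ℕ} {A : Matrix (Fin d) (Fin d) ℂ} (hA : A.IsHermitian) :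
    traceNorm A = ∑ i, |hA.eigenvalues i| := by
  set hP := Matrix.posSemidef_conjTranspose_mul_self A with hPdef
  set U := hA.eigenvectorUnitary with hU
  set lam := hA.eigenvalues with hlam
  set S : Matrix (Fin d) (Fin d) ℂ :=
    (U : Matrix (Fin d) (Fin d) ℂ) * Matrix.diagonal (fun i => ((|lam i| : ℝ) : ℂ)) *
      star (U : Matrix (Fin d) (Fin d) ℂ) with hSdef
  have hS : S.PosSemidef := conj_diag_psd U fun i => abs_nonneg _
  have hsq : S ^ 2 = Aᴴ * A := by
    rw [pow_two, hSdef, conj_diag_mul, hA.eq]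
    conv_rhs => rw [hA.spectral_theorem, Unitary.conjStarAlgAut_apply]
    rw [conj_diag_mul]
    have hfun : (fun i => ((|lam i| : ℝ) : ℂ) * ((|lam i| : ℝ) : ℂ))
        = (fun i => ((RCLike.ofReal ∘ hA.eigenvalues) i : ℂ) * ((RCLike.ofReal ∘ hA.eigenvalues) i : ℂ)) := by
      funext i
      simp only [Function.comp_apply]
      have h5 : (RCLike.ofReal (hA.eigenvalues i) : ℂ) = ((hA.eigenvalues i : ℝ) : ℂ) := rfl
      rw [h5, ← Complex.ofReal_mul, ← Complex.ofReal_mul, abs_mul_abs_self]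
    rw [hfun]
  have hSeq : S = hP.1.cfc Real.sqrt := by
    rw [← CFC.sqrt_sq S (Matrix.nonneg_iff_posSemidef.mpr hS), hsq, CFC.sqrt_eq_cfc,
      cfc_nnreal_eq_real _ (Aᴴ * A), hP.1.cfc_eq]
    congr 1; funext x; rw [Real.sqrt]
  have htr1 : (hP.1.cfc Real.sqrt).trace = ∑ i, ((Real.sqrt (hP.1.eigenvalues i) : ℝ) : ℂ) := by
    rw [IsHermitian.cfc, Unitary.conjStarAlgAut_apply]
    exact trace_conj_diag hP.1.eigenvectorUnitary fun i => Real.sqrt (hP.1.eigenvalues i)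
  have htr2 : S.trace = ∑ i, ((|lam i| : ℝ) : ℂ) :=
    trace_conj_diag U fun i => |lam i|
  have key : (∑ i, Real.sqrt (hP.1.eigenvalues i)) = ∑ i, |lam i| := by
    have : ((∑ i, Real.sqrt (hP.1.eigenvalues i) : ℝ) : ℂ)
        = ((∑ i, |lam i| : ℝ) : ℂ) := by
      push_cast
      rw [← htr1, ← htr2, hSeq]
    exact_mod_cast this
  simpa [traceNorm] using key


lemma abs_eq_maxes (x : ℝ) : |x| = max x 0 + max (-x) 0 := by
  rcases le_total 0 x with h | h
  · rw [abs_of_nonneg h, max_eq_left h, max_eq_right (neg_nonpos.mpr h)]; ring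
  · rw [abs_of_nonpos h, max_eq_right h, max_eq_left (neg_nonneg.mpr h)]; ring

lemma max_sub_max_neg (x : ℝ) : max x 0 - max (-x) 0 = x := by
  rcases le_total 0 x with h | h
  · rw [max_eq_left h, max_eq_right (neg_nonpos.mpr h)]; ring
  · rw [max_eq_right h, max_eq_left (neg_nonneg.mpr h)]; ring

theorem stmt_16 {d : ℕ} (ρ σ : Matrix (Fin d) (Fin d) ℂ) (hρ : IsDensity ρ) (hσ : IsDensity σ)
    (r s : Fin d → ℝ) (hr : Antitone r) (hs : Antitone s)
    (hre : ∃ e : Equiv.Perm (Fin d), r = hρ.1.1.eigenvalues ∘ e)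
    (hse : ∃ e : Equiv.Perm (Fin d), s = hσ.1.1.eigenvalues ∘ e) :
    ∑ i, |r i - s i| ≤ traceNorm (ρ - σ) := by
  classical
  obtain ⟨ea, hrea⟩ := hre
  obtain ⟨eb, hseb⟩ := hse
  have hΔ : (ρ - σ).IsHermitian := hρ.1.1.sub hσ.1.1
  set lam := hΔ.eigenvalues with hlam
  set U := hΔ.eigenvectorUnitary with hUdef
  set P : Matrix (Fin d) (Fin d) ℂ :=
    (U : Matrix (Fin d) (Fin d) ℂ) * Matrix.diagonal (fun i => ((max (lam i) 0 : ℝ) : ℂ)) *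
      star (U : Matrix (Fin d) (Fin d) ℂ) with hPdef
  set Nm : Matrix (Fin d) (Fin d) ℂ :=
    (U : Matrix (Fin d) (Fin d) ℂ) * Matrix.diagonal (fun i => ((max (-lam i) 0 : ℝ) : ℂ)) *
      star (U : Matrix (Fin d) (Fin d) ℂ) with hNmdef
  have hPpsd : P.PosSemidef := conj_diag_psd U fun i => le_max_right _ _
  have hNpsd : Nm.PosSemidef := conj_diag_psd U fun i => le_max_right _ _
  have hPN : P - Nm = ρ - σ := by
    rw [hPdef, hNmdef, ← Matrix.sub_mul, ← Matrix.mul_sub, Matrix.diagonal_sub]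
    conv_rhs => rw [hΔ.spectral_theorem, Unitary.conjStarAlgAut_apply]
    have hfun : (fun i => ((max (lam i) 0 : ℝ) : ℂ) - ((max (-lam i) 0 : ℝ) : ℂ))
        = (RCLike.ofReal ∘ hΔ.eigenvalues : Fin d → ℂ) := by
      funext i
      simp only [Function.comp_apply]
      rw [show (RCLike.ofReal (hΔ.eigenvalues i) : ℂ) = ((hΔ.eigenvalues i : ℝ) : ℂ) from rfl,
        ← Complex.ofReal_sub, max_sub_max_neg]
    rw [hfun]
  set τ : Matrix (Fin d) (Fin d) ℂ := ρ + Nm with hτdef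
  have hτalt : τ = σ + P := by
    rw [hτdef]
    calc ρ + Nm = ρ - (P - Nm) + P := by abel
      _ = ρ - (ρ - σ) + P := by rw [hPN]
      _ = σ + P := by abel
  have hτH : τ.IsHermitian := hρ.1.1.add hNpsd.1
  have hτρ : (τ - ρ).PosSemidef := by
    have : τ - ρ = Nm := by rw [hτdef]; abel
    rwa [this]
  have hτσ : (τ - σ).PosSemidef := by
    have : τ - σ = P := by rw [hτalt]; abel
    rwa [this]
  have ht0 : Antitone (hτH.eigenvalues ∘ ⇑(Tuple.sort fun i => -hτH.eigenvalues i)) := by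
    intro i j hij
    have h := Tuple.monotone_sort (fun i => -(hτH.eigenvalues i)) hij
    simp only [Function.comp_apply] at h
    exact neg_le_neg_iff.mp h
  set t : Fin d → ℝ := hτH.eigenvalues ∘ ⇑(Tuple.sort fun i => -hτH.eigenvalues i) with htdef
  have ht : Antitone t := ht0
  have hrt : ∀ k, r k ≤ t k := fun k =>
    eig_mono hρ.1.1 hτH hτρ hr ht ea (Tuple.sort fun i => -hτH.eigenvalues i) hrea htdef k
  have hst : ∀ k, s k ≤ t k := fun k =>
    eig_mono hσ.1.1 hτH hτσ hs ht eb (Tuple.sort fun i => -hτH.eigenvalues i) hseb htdef k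
  -- sums of eigenvalues
  have hsum_r : ∑ i, r i = 1 := by
    rw [hrea]
    have h := trace_eq_sum_eigs hρ.1.1
    have h' : (∑ i, (hρ.1.1.eigenvalues i : ℂ)) = 1 := h.symm.trans hρ.2
    have h2 : ((∑ i, hρ.1.1.eigenvalues i : ℝ) : ℂ) = 1 := by push_cast; exact h'
    have h3 : (∑ i, hρ.1.1.eigenvalues i : ℝ) = 1 := by exact_mod_cast h2
    exact (Equiv.sum_comp ea hρ.1.1.eigenvalues).trans h3
  have hsum_s : ∑ i, s i = 1 := by
    rw [hseb]
    have h := trace_eq_sum_eigs hσ.1.1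
    have h' : (∑ i, (hσ.1.1.eigenvalues i : ℂ)) = 1 := h.symm.trans hσ.2
    have h2 : ((∑ i, hσ.1.1.eigenvalues i : ℝ) : ℂ) = 1 := by push_cast; exact h'
    have h3 : (∑ i, hσ.1.1.eigenvalues i : ℝ) = 1 := by exact_mod_cast h2
    exact (Equiv.sum_comp eb hσ.1.1.eigenvalues).trans h3
  have hsum_t : ∑ i, t i = 1 + ∑ i, max (-lam i) 0 := by
    have h1 : τ.trace = 1 + ∑ i, ((max (-lam i) 0 : ℝ) : ℂ) := by
      rw [hτdef, Matrix.trace_add, hρ.2, hNmdef, trace_conj_diag U fun i => max (-lam i) 0]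
    have h2 := trace_eq_sum_eigs hτH
    have h3 : ((∑ i, hτH.eigenvalues i : ℝ) : ℂ)
        = ((1 + ∑ i, max (-lam i) 0 : ℝ) : ℂ) := by
      push_cast
      rw [← h2, h1]
    have h4 : (∑ i, hτH.eigenvalues i : ℝ) = 1 + ∑ i, max (-lam i) 0 := by exact_mod_cast h3
    rw [htdef]
    exact (Equiv.sum_comp (Tuple.sort fun i => -hτH.eigenvalues i) hτH.eigenvalues).trans h4
  have hsum_lam : ∑ i, lam i = 0 := by
    have h := trace_eq_sum_eigs hΔ
    have hz : (ρ - σ).trace = 0 := by rw [Matrix.trace_sub, hρ.2, hσ.2, sub_self]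
    have h' : (∑ i, (lam i : ℂ)) = 0 := h.symm.trans hz
    have h2 : ((∑ i, lam i : ℝ) : ℂ) = 0 := by push_cast; exact h'
    exact_mod_cast h2
  have htn : traceNorm (ρ - σ) = ∑ i, |lam i| := traceNorm_hermitian hΔ
  calc ∑ i, |r i - s i| ≤ ∑ i, ((t i - r i) + (t i - s i)) := by
        refine Finset.sum_le_sum fun i _ => ?_
        have h1 := hrt i
        have h2 := hst i
        exact abs_sub_le_iff.mpr ⟨by linarith, by linarith⟩
    _ = 2 * ∑ i, t i - ∑ i, r i - ∑ i, s i := by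
        rw [Finset.sum_add_distrib, Finset.sum_sub_distrib, Finset.sum_sub_distrib]
        ring
    _ = 2 * ∑ i, max (-lam i) 0 := by rw [hsum_t, hsum_r, hsum_s]; ring
    _ = ∑ i, |lam i| := by
        have e1 : ∑ i, |lam i| = ∑ i, max (lam i) 0 + ∑ i, max (-lam i) 0 := by
          rw [← Finset.sum_add_distrib]
          exact Finset.sum_congr rfl fun i _ => abs_eq_maxes (lam i)
        have e2 : ∑ i, max (lam i) 0 - ∑ i, max (-lam i) 0 = 0 := by
          rw [← Finset.sum_sub_distrib]
          rw [show (∑ i, (max (lam i) 0 - max (-lam i) 0)) = ∑ i, lam i from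
            Finset.sum_congr rfl fun i _ => max_sub_max_neg (lam i), hsum_lam]
        linarith
    _ = traceNorm (ρ - σ) := htn.symm
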